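/- arXiv:2307.08840 — 3 statements merged into one kernel-verified Lean document; each statement's English description precedes it below -/
import Mathlib

section
/- Let (𝒳, μ) be the covariate probability space, (𝒯, ν) the posterior parameter probability space, δ̃ a measurable baseline policy, Δ a set of measurable policies δ : 𝒳 → Fin K, and ε ≥ 0. A policy δ* ∈ Δ satisfies R_p(δ*, δ̃) ≤ ε and maximizes the posterior expected value ∫_𝒯 V(δ, θ) dν(θ) among all δ ∈ Δ with R_p(δ, δ̃) ≤ ε, if and only if δ* satisfies ∑_{k=0}^{K-1} ∫_𝒳 1{δ*(x) = k} r_k(x) dμ(x) ≤ ε and maximizes ∑_{k=0}^{K-1} ∫_𝒳 1{δ(x) = k} b_k(x) dμ(x) among all δ ∈ Δ with ∑_{k=0}^{K-1} ∫_𝒳 1{δ(x) = k} r_k(x) dμ(x) ≤ ε. (Theorem 1: the chance-constrained Bayesian safe policy learning problem is equivalent to a deterministic optimization with a linear constraint.) -/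
open MeasureTheory ProbabilityTheory

variable {X T : Type*} [MeasurableSpace X] [MeasurableSpace T]

/-- The value of policy `δ` under parameter `θ`: `V(δ, θ) = ∫ w x (δ x) θ dμ(x)`. -/
noncomputable def policyValue {K : ℕ} (μ : Measure X) (w : X → Fin K → T → ℝ)
    (δ : X → Fin K) (θ : T) : ℝ :=
  ∫ x, w x (δ x) θ ∂μ

/-- The Average Conditional Risk of `δ` relative to the baseline `δt` under parameter `θ`:
`R(δ, δt, θ) = μ {x : w x (δ x) θ < w x (δt x) θ}`. -/
noncomputable def ACRisk {K : ℕ} (μ : Measure X) (w : X → Fin K → T → ℝ)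
    (δ δt : X → Fin K) (θ : T) : ℝ :=
  (μ {x | w x (δ x) θ < w x (δt x) θ}).toReal

/-- The Posterior Average Conditional Risk: `R_p(δ, δt) = ∫ R(δ, δt, θ) dν(θ)`. -/
noncomputable def PACRisk {K : ℕ} (μ : Measure X) (ν : Measure T)
    (w : X → Fin K → T → ℝ) (δ δt : X → Fin K) : ℝ :=
  ∫ θ, ACRisk μ w δ δt θ ∂ν

/-- The posterior conditional risk of decision `k`:
`r_k(x) = ν {θ : τ k x θ < 0}` where `τ k x θ = w x k θ - w x (δt x) θ`. -/
noncomputable def condRisk {K : ℕ} (ν : Measure T) (w : X → Fin K → T → ℝ)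
    (δt : X → Fin K) (k : Fin K) (x : X) : ℝ :=
  (ν {θ | w x k θ - w x (δt x) θ < 0}).toReal

/-- The posterior conditional benefit of decision `k`:
`b_k(x) = ∫ τ k x θ dν(θ)` where `τ k x θ = w x k θ - w x (δt x) θ`. -/
noncomputable def condBenefit {K : ℕ} (ν : Measure T) (w : X → Fin K → T → ℝ)
    (δt : X → Fin K) (k : Fin K) (x : X) : ℝ :=
  ∫ θ, (w x k θ - w x (δt x) θ) ∂ν

section Aux

variable {K : ℕ} {μ : Measure X} {ν : Measure T} {w : X → Fin K → T → ℝ}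

private lemma aux_sum_ite {δ : X → Fin K} (f : Fin K → X → ℝ) (x : X) :
    (∑ k : Fin K, if δ x = k then f k x else 0) = f (δ x) x := by
  rw [Finset.sum_ite_eq Finset.univ (δ x) (fun k => f k x)]
  simp

private lemma aux_meas (hw : ∀ k : Fin K, Measurable fun p : X × T => w p.1 k p.2)
    {δ : X → Fin K} (hδ : Measurable δ) :
    Measurable fun p : X × T => w p.1 (δ p.1) p.2 := by
  have h : (fun p : X × T => w p.1 (δ p.1) p.2)
      = fun p => ∑ k : Fin K, if δ p.1 = k then w p.1 k p.2 else 0 := by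
    funext p
    rw [Finset.sum_ite_eq Finset.univ (δ p.1) (fun k => w p.1 k p.2)]
    simp
  rw [h]
  exact Finset.measurable_sum _ fun k _ =>
    Measurable.ite ((hδ.comp measurable_fst) (measurableSet_singleton k)) (hw k) measurable_const

private lemma aux_int [SFinite μ] [SFinite ν]
    (hint : ∀ k : Fin K, Integrable (fun p : X × T => w p.1 k p.2) (μ.prod ν))
    {δ : X → Fin K} (hδ : Measurable δ) :
    Integrable (fun p : X × T => w p.1 (δ p.1) p.2) (μ.prod ν) := by
  have h : (fun p : X × T => w p.1 (δ p.1) p.2)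
      = fun p => ∑ k : Fin K, if δ p.1 = k then w p.1 k p.2 else 0 := by
    funext p
    rw [Finset.sum_ite_eq Finset.univ (δ p.1) (fun k => w p.1 k p.2)]
    simp
  rw [h]
  refine integrable_finset_sum _ fun k _ => ?_
  have h2 : (fun p : X × T => if δ p.1 = k then w p.1 k p.2 else 0)
      = Set.indicator {p : X × T | δ p.1 = k} (fun p => w p.1 k p.2) := by
    funext p; simp [Set.indicator_apply]
  rw [h2]
  exact (hint k).indicator ((hδ.comp measurable_fst) (measurableSet_singleton k))

private lemma risk_eq [IsProbabilityMeasure μ] [IsProbabilityMeasure ν]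
    (hw : ∀ k : Fin K, Measurable fun p : X × T => w p.1 k p.2)
    {δt : X → Fin K} (hδt : Measurable δt) {δ : X → Fin K} (hδ : Measurable δ) :
    (∑ k : Fin K, ∫ x, (if δ x = k then condRisk ν w δt k x else 0) ∂μ)
      = PACRisk μ ν w δ δt := by
  set S : Set (X × T) := {p | w p.1 (δ p.1) p.2 < w p.1 (δt p.1) p.2} with hS
  have hSm : MeasurableSet S := measurableSet_lt (aux_meas hw hδ) (aux_meas hw hδt)
  have hcondmeas : ∀ k : Fin K, Measurable fun x => condRisk ν w δt k x := by
    intro k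
    have hSk : MeasurableSet {p : X × T | w p.1 k p.2 - w p.1 (δt p.1) p.2 < 0} :=
      measurableSet_lt ((hw k).sub (aux_meas hw hδt)) measurable_const
    exact (measurable_measure_prodMk_left hSk).ennreal_toReal
  have hcondint : ∀ k : Fin K, Integrable (fun x => condRisk ν w δt k x) μ := by
    intro k
    refine Integrable.mono' (integrable_const (1 : ℝ))
      (hcondmeas k).aestronglyMeasurable (ae_of_all _ fun x => ?_)
    unfold condRisk
    rw [Real.norm_of_nonneg ENNReal.toReal_nonneg]
    calc (ν {θ | w x k θ - w x (δt x) θ < 0}).toReal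
        ≤ (ν Set.univ).toReal :=
          ENNReal.toReal_mono (measure_ne_top ν _) (measure_mono (Set.subset_univ _))
      _ = 1 := by simp
  have hint_k : ∀ k : Fin K,
      Integrable (fun x => if δ x = k then condRisk ν w δt k x else 0) μ := by
    intro k
    have h2 : (fun x => if δ x = k then condRisk ν w δt k x else 0)
        = Set.indicator {x | δ x = k} (fun x => condRisk ν w δt k x) := by
      funext x; simp [Set.indicator_apply]
    rw [h2]
    exact (hcondint k).indicator (hδ (measurableSet_singleton k))
  rw [← integral_finset_sum _ (fun k _ => hint_k k)]
  have h1 : (fun x => ∑ k : Fin K, if δ x = k then condRisk ν w δt k x else 0)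
      = fun x => (ν (Prod.mk x ⁻¹' S)).toReal := by
    funext x
    rw [aux_sum_ite (fun k x => condRisk ν w δt k x) x]
    unfold condRisk
    congr 1
    congr 1
    ext θ
    simp [hS, sub_neg]
  rw [h1]
  have hL : ∫ x, (ν (Prod.mk x ⁻¹' S)).toReal ∂μ = ((μ.prod ν) S).toReal := by
    rw [integral_toReal (measurable_measure_prodMk_left hSm).aemeasurable
      (ae_of_all _ fun x => measure_lt_top ν _), Measure.prod_apply hSm]
  have hR : PACRisk μ ν w δ δt = ((μ.prod ν) S).toReal := by
    unfold PACRisk ACRisk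
    have h2 : (fun θ => (μ {x | w x (δ x) θ < w x (δt x) θ}).toReal)
        = fun θ => (μ ((fun x => (x, θ)) ⁻¹' S)).toReal := rfl
    rw [h2, integral_toReal (measurable_measure_prodMk_right hSm).aemeasurable
      (ae_of_all _ fun θ => measure_lt_top μ _), ← Measure.prod_apply_symm hSm]
  rw [hL, hR]

private lemma benefit_eq [IsProbabilityMeasure μ] [IsProbabilityMeasure ν]
    (hw : ∀ k : Fin K, Measurable fun p : X × T => w p.1 k p.2)
    (hint : ∀ k : Fin K, Integrable (fun p : X × T => w p.1 k p.2) (μ.prod ν))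
    {δt : X → Fin K} (hδt : Measurable δt) {δ : X → Fin K} (hδ : Measurable δ) :
    (∑ k : Fin K, ∫ x, (if δ x = k then condBenefit ν w δt k x else 0) ∂μ)
      = (∫ θ, policyValue μ w δ θ ∂ν) - ∫ θ, policyValue μ w δt θ ∂ν := by
  have hgδ : Integrable
      (fun p : X × T => w p.1 (δ p.1) p.2 - w p.1 (δt p.1) p.2) (μ.prod ν) :=
    (aux_int hint hδ).sub (aux_int hint hδt)
  have hbk : ∀ k : Fin K, Integrable (fun x => condBenefit ν w δt k x) μ :=
    fun k => ((hint k).sub (aux_int hint hδt)).integral_prod_left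
  have hint_k : ∀ k : Fin K,
      Integrable (fun x => if δ x = k then condBenefit ν w δt k x else 0) μ := by
    intro k
    have h2 : (fun x => if δ x = k then condBenefit ν w δt k x else 0)
        = Set.indicator {x | δ x = k} (fun x => condBenefit ν w δt k x) := by
      funext x; simp [Set.indicator_apply]
    rw [h2]
    exact (hbk k).indicator (hδ (measurableSet_singleton k))
  rw [← integral_finset_sum _ (fun k _ => hint_k k)]
  have h1 : (fun x => ∑ k : Fin K, if δ x = k then condBenefit ν w δt k x else 0)
      = fun x => ∫ θ, (w x (δ x) θ - w x (δt x) θ) ∂ν := by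
    funext x
    rw [aux_sum_ite (fun k x => condBenefit ν w δt k x) x]
    rfl
  rw [h1]
  rw [integral_integral_swap (f := fun x θ => w x (δ x) θ - w x (δt x) θ) hgδ]
  have hae1 : ∀ᵐ θ ∂ν, Integrable (fun x => w x (δ x) θ) μ :=
    (aux_int hint hδ).prod_left_ae
  have hae2 : ∀ᵐ θ ∂ν, Integrable (fun x => w x (δt x) θ) μ :=
    (aux_int hint hδt).prod_left_ae
  rw [integral_congr_ae ((hae1.and hae2).mono fun θ hθ => integral_sub hθ.1 hθ.2)]
  exact integral_sub (aux_int hint hδ).integral_prod_right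
    (aux_int hint hδt).integral_prod_right

end Aux

/-- Theorem 1 of the paper: the chance-constrained Bayesian safe policy learning problem
(maximize the posterior expected value subject to `PACRisk ≤ ε`) is equivalent to the
deterministic optimization problem with the linear objective
`∑ k ∫ 1{δ(x) = k} b_k(x) dμ(x)` and the linear constraint
`∑ k ∫ 1{δ(x) = k} r_k(x) dμ(x) ≤ ε`. -/
theorem bayes_safe_policy_equiv {K : ℕ}
    (μ : Measure X) (ν : Measure T) [IsProbabilityMeasure μ] [IsProbabilityMeasure ν]
    (w : X → Fin K → T → ℝ)
    (hw : ∀ k : Fin K, Measurable fun p : X × T => w p.1 k p.2)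
    (hint : ∀ k : Fin K, Integrable (fun p : X × T => w p.1 k p.2) (μ.prod ν))
    (δt : X → Fin K) (hδt : Measurable δt)
    (Δ : Set (X → Fin K)) (hΔ : ∀ δ ∈ Δ, Measurable δ)
    (ε : ℝ) (hε : 0 ≤ ε)
    (δs : X → Fin K) (hδs : δs ∈ Δ) :
    (PACRisk μ ν w δs δt ≤ ε ∧
        ∀ δ ∈ Δ, PACRisk μ ν w δ δt ≤ ε →
          (∫ θ, policyValue μ w δ θ ∂ν) ≤ ∫ θ, policyValue μ w δs θ ∂ν) ↔
      ((∑ k : Fin K, ∫ x, (if δs x = k then condRisk ν w δt k x else 0) ∂μ) ≤ ε ∧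
        ∀ δ ∈ Δ,
          (∑ k : Fin K, ∫ x, (if δ x = k then condRisk ν w δt k x else 0) ∂μ) ≤ ε →
            (∑ k : Fin K, ∫ x, (if δ x = k then condBenefit ν w δt k x else 0) ∂μ) ≤
              ∑ k : Fin K, ∫ x, (if δs x = k then condBenefit ν w δt k x else 0) ∂μ) := by
  have hr : ∀ δ ∈ Δ,
      (∑ k : Fin K, ∫ x, (if δ x = k then condRisk ν w δt k x else 0) ∂μ)
        = PACRisk μ ν w δ δt := fun δ hδ => risk_eq hw hδt (hΔ δ hδ)
  have hb : ∀ δ ∈ Δ,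
      (∑ k : Fin K, ∫ x, (if δ x = k then condBenefit ν w δt k x else 0) ∂μ)
        = (∫ θ, policyValue μ w δ θ ∂ν) - ∫ θ, policyValue μ w δt θ ∂ν :=
    fun δ hδ => benefit_eq hw hint hδt (hΔ δ hδ)
  constructor
  · rintro ⟨h1, h2⟩
    refine ⟨by rw [hr δs hδs]; exact h1, fun δ hδmem hδc => ?_⟩
    rw [hb δ hδmem, hb δs hδs]
    exact sub_le_sub_right (h2 δ hδmem (by rw [← hr δ hδmem]; exact hδc)) _
  · rintro ⟨h1, h2⟩
    refine ⟨by rw [← hr δs hδs]; exact h1, fun δ hδmem hδc => ?_⟩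
    have := h2 δ hδmem (by rw [hr δ hδmem]; exact hδc)
    rw [hb δ hδmem, hb δs hδs] at this
    linarith
end

section
/- For every measurable policy δ : 𝒳 → Fin K, the Posterior Average Conditional Risk admits the linear representation R_p(δ, δ̃) = ∑_{k=0}^{K-1} ∫_𝒳 1{δ(x) = k} r_k(x) dμ(x), where r_k(x) = ν{θ : τ k x θ < 0}. -/
open MeasureTheory ProbabilityTheory ENNReal

variable {X T : Type*} [MeasurableSpace X] [MeasurableSpace T]

/-- For every measurable policy `δ`, the PACRisk admits the linear representation
`R_p(δ, δt) = ∑ k ∫ 1{δ(x) = k} r_k(x) dμ(x)`. -/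
theorem pacrisk_linear_representation {K : ℕ}
    (μ : Measure X) (ν : Measure T) [IsProbabilityMeasure μ] [IsProbabilityMeasure ν]
    (w : X → Fin K → T → ℝ)
    (hw : ∀ k : Fin K, Measurable fun p : X × T => w p.1 k p.2)
    (δt : X → Fin K) (hδt : Measurable δt)
    (δ : X → Fin K) (hδ : Measurable δ) :
    PACRisk μ ν w δ δt =
      ∑ k : Fin K, ∫ x, (if δ x = k then condRisk ν w δt k x else 0) ∂μ := by
  classical
  set S : Set (X × T) := {p | w p.1 (δ p.1) p.2 < w p.1 (δt p.1) p.2} with hS_def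
  have hδw : Measurable fun p : X × T => w p.1 (δ p.1) p.2 := by
    have h : (fun p : X × T => w p.1 (δ p.1) p.2)
        = fun p => ∑ k : Fin K, if δ p.1 = k then w p.1 k p.2 else 0 := by
      funext p; simp
    rw [h]
    refine Finset.measurable_sum _ fun k _ => Measurable.ite ?_ (hw k) measurable_const
    exact (hδ.comp measurable_fst) (measurableSet_singleton k)
  have hδtw : Measurable fun p : X × T => w p.1 (δt p.1) p.2 := by
    have h : (fun p : X × T => w p.1 (δt p.1) p.2)
        = fun p => ∑ k : Fin K, if δt p.1 = k then w p.1 k p.2 else 0 := by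
      funext p; simp
    rw [h]
    refine Finset.measurable_sum _ fun k _ => Measurable.ite ?_ (hw k) measurable_const
    exact (hδt.comp measurable_fst) (measurableSet_singleton k)
  have hSm : MeasurableSet S := measurableSet_lt hδw hδtw
  have hSk : ∀ k : Fin K, MeasurableSet {p : X × T | w p.1 k p.2 - w p.1 (δt p.1) p.2 < 0} :=
    fun k => measurableSet_lt ((hw k).sub hδtw) measurable_const
  set g : Fin K → X → ℝ≥0∞ := fun k x => ν {θ | w x k θ - w x (δt x) θ < 0} with hg_def
  have hg : ∀ k, Measurable (g k) := fun k => measurable_measure_prodMk_left (hSk k)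
  have hsec : ∀ x, ν (Prod.mk x ⁻¹' S) = ∑ k : Fin K, if δ x = k then g k x else 0 := by
    intro x
    have h1 : Prod.mk x ⁻¹' S = {θ | w x (δ x) θ - w x (δt x) θ < 0} := by
      ext θ; simp [hS_def, sub_neg]
    rw [h1]
    simp [hg_def]
  have hL : PACRisk μ ν w δ δt = (∫⁻ x, ν (Prod.mk x ⁻¹' S) ∂μ).toReal := by
    unfold PACRisk
    have h2 : (fun θ => ACRisk μ w δ δt θ)
        = fun θ => (μ ((fun x => (x, θ)) ⁻¹' S)).toReal := rfl
    rw [h2, integral_toReal (Measurable.aemeasurable (μ := ν) (measurable_measure_prodMk_right hSm))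
      (ae_of_all _ fun θ => measure_lt_top μ _)]
    rw [← Measure.prod_apply_symm hSm, Measure.prod_apply hSm]
  have hR : ∀ k : Fin K,
      (∫ x, (if δ x = k then condRisk ν w δt k x else 0) ∂μ)
        = (∫⁻ x, (if δ x = k then g k x else 0) ∂μ).toReal := by
    intro k
    have heq : (fun x => if δ x = k then condRisk ν w δt k x else 0)
        = fun x => ((if δ x = k then g k x else 0 : ℝ≥0∞)).toReal := by
      funext x; by_cases h : δ x = k <;> simp [h, condRisk, hg_def]
    rw [heq, integral_toReal]
    · exact (Measurable.ite (hδ (measurableSet_singleton k)) (hg k) measurable_const).aemeasurable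
    · exact ae_of_all _ fun x => by
        by_cases h : δ x = k <;> simp [h] <;> exact measure_lt_top ν _
  have hfin : ∀ k ∈ Finset.univ, (∫⁻ x, (if δ x = k then g k x else 0) ∂μ) ≠ ∞ := by
    intro k _
    have hb : (∫⁻ x, (if δ x = k then g k x else 0) ∂μ) ≤ ∫⁻ _, (1 : ℝ≥0∞) ∂μ := by
      refine lintegral_mono fun x => ?_
      by_cases h : δ x = k <;> simp [h] <;> exact prob_le_one
    refine ne_of_lt (lt_of_le_of_lt hb ?_)
    simp
  rw [hL, Finset.sum_congr rfl fun k _ => hR k, ← ENNReal.toReal_sum hfin]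
  congr 1
  rw [← lintegral_finset_sum]
  · exact lintegral_congr fun x => hsec x
  · exact fun k _ => Measurable.ite (hδ (measurableSet_singleton k)) (hg k) measurable_const
end

section
/- For every measurable policy δ : 𝒳 → Fin K, the difference between the posterior expected values of δ and of the baseline policy δ̃ equals the linear functional ∫_𝒯 V(δ, θ) dν(θ) − ∫_𝒯 V(δ̃, θ) dν(θ) = ∑_{k=0}^{K-1} ∫_𝒳 1{δ(x) = k} b_k(x) dμ(x), where b_k(x) = ∫_𝒯 τ k x θ dν(θ). -/
open MeasureTheory ProbabilityTheory

variable {X T : Type*} [MeasurableSpace X] [MeasurableSpace T]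

/-- The difference between the posterior expected values of `δ` and the baseline `δt` equals
the linear functional `∑ k ∫ 1{δ(x) = k} b_k(x) dμ(x)`. -/
theorem posterior_value_difference {K : ℕ}
    (μ : Measure X) (ν : Measure T) [IsProbabilityMeasure μ] [IsProbabilityMeasure ν]
    (w : X → Fin K → T → ℝ)
    (hw : ∀ k : Fin K, Measurable fun p : X × T => w p.1 k p.2)
    (hint : ∀ k : Fin K, Integrable (fun p : X × T => w p.1 k p.2) (μ.prod ν))
    (δt : X → Fin K) (hδt : Measurable δt)
    (δ : X → Fin K) (hδ : Measurable δ) :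
    (∫ θ, policyValue μ w δ θ ∂ν) - (∫ θ, policyValue μ w δt θ ∂ν) =
      ∑ k : Fin K, ∫ x, (if δ x = k then condBenefit ν w δt k x else 0) ∂μ := by
  -- Integrability of composed policies on the product space
  have hintd : ∀ d : X → Fin K, Measurable d →
      Integrable (fun p : X × T => w p.1 (d p.1) p.2) (μ.prod ν) := by
    intro d hd
    have heq : (fun p : X × T => w p.1 (d p.1) p.2)
        = fun p => ∑ k : Fin K, Set.indicator {q : X × T | d q.1 = k}
            (fun q => w q.1 k q.2) p := by
      funext p
      rw [Finset.sum_eq_single (d p.1)]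
      · simp [Set.indicator_apply]
      · intro k _ hk
        simp [Set.indicator_apply, Ne.symm hk]
      · simp
    rw [heq]
    apply integrable_finset_sum
    intro k _
    exact (hint k).indicator ((hd.comp measurable_fst) (measurableSet_singleton k))
  -- Swap the order of integration
  have key : ∀ d : X → Fin K, Measurable d →
      ∫ θ, policyValue μ w d θ ∂ν = ∫ x, ∫ θ, w x (d x) θ ∂ν ∂μ := by
    intro d hd
    exact (integral_integral_swap (f := fun x θ => w x (d x) θ) (hintd d hd)).symm
  rw [key δ hδ, key δt hδt]
  -- outer integrability
  have houtδ : Integrable (fun x => ∫ θ, w x (δ x) θ ∂ν) μ :=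
    (hintd δ hδ).integral_prod_left
  have houtδt : Integrable (fun x => ∫ θ, w x (δt x) θ ∂ν) μ :=
    (hintd δt hδt).integral_prod_left
  rw [← integral_sub houtδ houtδt]
  -- The RHS: each summand is integrable
  have hcondInt : ∀ k : Fin K, Integrable (fun x => condBenefit ν w δt k x) μ := by
    intro k
    have : Integrable (fun p : X × T => w p.1 k p.2 - w p.1 (δt p.1) p.2) (μ.prod ν) :=
      (hint k).sub (hintd δt hδt)
    exact this.integral_prod_left
  have hiteInt : ∀ k : Fin K,
      Integrable (fun x => if δ x = k then condBenefit ν w δt k x else 0) μ := by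
    intro k
    have heq : (fun x => if δ x = k then condBenefit ν w δt k x else 0)
        = Set.indicator {x | δ x = k} (fun x => condBenefit ν w δt k x) := by
      funext x; simp [Set.indicator_apply]
    rw [heq]
    exact (hcondInt k).indicator (hδ (measurableSet_singleton k))
  rw [← integral_finset_sum _ (fun k _ => hiteInt k)]
  -- Now compare the integrands a.e.
  apply integral_congr_ae
  have haeδ := (hintd δ hδ).prod_right_ae
  have haeδt := (hintd δt hδt).prod_right_ae
  filter_upwards [haeδ, haeδt] with x h1 h2
  have hsum : ∑ k : Fin K, (if δ x = k then condBenefit ν w δt k x else 0)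
      = condBenefit ν w δt (δ x) x := by
    rw [Finset.sum_eq_single (δ x)]
    · simp
    · intro k _ hk; simp [Ne.symm hk]
    · simp
  rw [hsum, condBenefit, integral_sub h1 h2]
end
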